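/- Let (i_n ; n ≥ 1) be a bounded sequence of positive integers and let x = lim_{k→∞} τ^{i₁}σ^{i₂}τ^{i₃}⋯τ^{i_{2k-1}}σ^{i_{2k}}(000⋯) ∈ {0,1}^ℕ. Then x is linearly recurrent. -/

import Mathlib

namespace DurandLR

variable {A B : Type*}

/-- `u` occurs at position `i` in the one-sided sequence `x`. -/
def OccursAt (x : ℕ → A) (u : List A) (i : ℕ) : Prop :=
  ∀ k : Fin u.length, x (i + (k : ℕ)) = u.get k

/-- `u` occurs (somewhere) in the one-sided sequence `x`. -/
def Occurs (x : ℕ → A) (u : List A) : Prop := ∃ i, OccursAt x u i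

/-- `u` occurs at position `i` in the two-sided sequence `x`. -/
def OccursAtZ (x : ℤ → A) (u : List A) (i : ℤ) : Prop :=
  ∀ k : Fin u.length, x (i + (k : ℕ)) = u.get k

def OccursZ (x : ℤ → A) (u : List A) : Prop := ∃ i, OccursAtZ x u i

/-- The word `u` has exactly `m` occurrences in the finite word `w`. -/
def OccCountEq (u w : List A) (m : ℕ) : Prop :=
  {i : ℕ | u <+: w.drop i}.ncard = m

/-- `w` is a return word to `u` in the one-sided sequence `x`: `wu` occurs in `x`,
`u` is a prefix of `wu` and `u` has exactly two occurrences in `wu`. -/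
def IsReturnWord (x : ℕ → A) (u w : List A) : Prop :=
  Occurs x (w ++ u) ∧ u <+: (w ++ u) ∧ OccCountEq u (w ++ u) 2

/-- `w` is a return word to `u` in the two-sided sequence `x`. -/
def IsReturnWordZ (x : ℤ → A) (u w : List A) : Prop :=
  OccursZ x (w ++ u) ∧ u <+: (w ++ u) ∧ OccCountEq u (w ++ u) 2

/-- `x` is uniformly recurrent: every word occurring in `x` occurs with bounded gaps. -/
def UniformlyRecurrent (x : ℕ → A) : Prop :=
  ∀ u, Occurs x u → ∃ M : ℕ, ∀ i : ℕ, ∃ j, i ≤ j ∧ j < i + M ∧ OccursAt x u j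

def UniformlyRecurrentZ (x : ℤ → A) : Prop :=
  ∀ u, OccursZ x u → ∃ M : ℕ, ∀ i : ℤ, ∃ j : ℤ, i ≤ j ∧ j < i + M ∧ OccursAtZ x u j

/-- `x` is linearly recurrent with constant `K`. -/
def LinearlyRecurrentWith (x : ℕ → A) (K : ℕ) : Prop :=
  UniformlyRecurrent x ∧ ∀ u w, IsReturnWord x u w → w.length ≤ K * u.length

def LinearlyRecurrent (x : ℕ → A) : Prop := ∃ K, LinearlyRecurrentWith x K

def LinearlyRecurrentZ (x : ℤ → A) : Prop :=
  UniformlyRecurrentZ x ∧ ∃ K : ℕ, ∀ u w, IsReturnWordZ x u w → w.length ≤ K * u.length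

/-- The subshift generated by a two-sided sequence `x` : all `z` whose finite subwords
occur in `x`. -/
def SubshiftGenZ (x : ℤ → A) : Set (ℤ → A) := {z | ∀ u, OccursZ z u → OccursZ x u}

/-- The subshift generated by a one-sided sequence `x`. -/
def SubshiftGen (x : ℕ → A) : Set (ℤ → A) := {z | ∀ u, OccursZ z u → Occurs x u}

/-- A minimal subshift: nonempty and every element generates it. -/
def IsMinimalSubshift (X : Set (ℤ → A)) : Prop :=
  X.Nonempty ∧ ∀ z ∈ X, X = SubshiftGenZ z

/-- A linearly recurrent subshift: minimal and containing an LR sequence. -/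
def IsLRSubshift (X : Set (ℤ → A)) : Prop :=
  IsMinimalSubshift X ∧ ∃ x ∈ X, LinearlyRecurrentZ x

def IsPeriodic (z : ℤ → A) : Prop := ∃ p : ℕ, 0 < p ∧ ∀ n : ℤ, z (n + p) = z n

/-- Image of a finite word under a morphism (substitution). -/
def wordMap (σ : A → List B) : List A → List B
  | [] => []
  | a :: u => σ a ++ wordMap σ u

/-- Composition of two morphisms: `compM σ τ = σ ∘ τ`. -/
def compM (σ τ : A → List A) : A → List A := fun b => wordMap σ (τ b)

/-- Iterate of a morphism: `powM σ n = σ^n`. -/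
def powM (σ : A → List A) : ℕ → A → List A
  | 0 => fun b => [b]
  | n + 1 => compM σ (powM σ n)

/-- `chain σ r n = σ_r ∘ σ_{r+1} ∘ ⋯ ∘ σ_{r+n-1}` (the empty composition for `n = 0`). -/
def chain (σ : ℕ → A → List A) (r : ℕ) : ℕ → A → List A
  | 0 => fun b => [b]
  | n + 1 => fun b => wordMap (chain σ r n) (σ (r + n) b)

/-- The periodic infinite sequence `www⋯` obtained by repeating the word `w`
(with a default letter for the degenerate empty case). -/
def repSeq (w : List A) (d : A) : ℕ → A := fun i => w.getD (i % w.length) d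

/-- The prefix of length `n` of the sequence `x`, as a word. -/
def seqTake (x : ℕ → A) (n : ℕ) : List A := (List.range n).map x

/-- `y` is the image of the infinite sequence `z` under the morphism `σ`:
the image of every prefix of `z` is a prefix of `y`. -/
def IsSeqImage (σ : A → List B) (z : ℕ → A) (y : ℕ → B) : Prop :=
  ∀ n, seqTake y (wordMap σ (seqTake z n)).length = wordMap σ (seqTake z n)

/-- `σ_0 σ_1 ⋯ σ_n (aaa⋯)` converges to `x` in the product topology, where the `n`-th
approximation is the periodic sequence obtained by repeating the word `W n`. -/
def ConvergesTo (W : ℕ → List A) (d : A) (x : ℕ → A) : Prop :=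
  ∀ m, ∃ N, ∀ n ≥ N, repSeq (W n) d m = x m

/-- A proper morphism: all images begin with the same letter and end with the same letter. -/
def ProperMorphism (σ : A → List A) : Prop :=
  ∃ l r : A, ∀ b, (σ b).head? = some l ∧ (σ b).getLast? = some r

/-- Primitivity with constant `s₀` of a directive sequence of morphisms
`σ_n : A_{n+1} → A_n^*`: every `b ∈ A_r` occurs in `σ_{r+1} ⋯ σ_{r+s₀} (c)`
for every `c ∈ A_{r+s₀+1}`. -/
def PrimitiveWith (σ : ℕ → A → List A) (Aseq : ℕ → Set A) (s0 : ℕ) : Prop :=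
  ∀ r : ℕ, ∀ b ∈ Aseq r, ∀ c ∈ Aseq (r + s0 + 1), b ∈ chain σ (r + 1) s0 c

/-- The data of an S-adic system: `a` belongs to every alphabet and
`σ_n` maps `A_{n+1}` into words over `A_n`. -/
def SAdicSystem (σ : ℕ → A → List A) (Aseq : ℕ → Set A) (a : A) : Prop :=
  (∀ n, a ∈ Aseq n) ∧ (∀ n, ∀ b ∈ Aseq (n + 1), ∀ c ∈ σ n b, c ∈ Aseq n)

/-- `x` is the S-adic sequence generated by the directive sequence `σ` and letter `a`:
`σ_0 σ_1 ⋯ σ_n (aaa⋯)` converges to `x`. -/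
def GeneratesSAdic (σ : ℕ → A → List A) (Aseq : ℕ → Set A) (a : A) (x : ℕ → A) : Prop :=
  SAdicSystem σ Aseq a ∧ ConvergesTo (fun n => chain σ 0 (n + 1) a) a x

/-- The complexity function `p_x(n)`: the number of distinct words of length `n`
occurring in `x`. -/
noncomputable def complexity (x : ℕ → A) (n : ℕ) : ℕ := {u : List A | u.length = n ∧ Occurs x u}.ncard

/-- Any two successive occurrences of `u` in `x` differ by at most `M`. -/
def GapsBoundedBy (x : ℕ → A) (u : List A) (M : ℕ) : Prop :=
  ∀ i j, OccursAt x u i → OccursAt x u j → i < j →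
    (∀ k, i < k → k < j → ¬ OccursAt x u k) → j - i ≤ M

/-- The finite word `x_{[p,q)}` of a two-sided sequence. -/
def zSeg (x : ℤ → A) (p q : ℤ) : List A := (List.range (q - p).toNat).map fun t => x (p + t)

/-- `w` is a return word to `u.v` in the two-sided sequence `x`: there are two
consecutive occurrences `j < k` of `uv` in `x` with `w = x_{[j+|u|, k+|u|)}`. -/
def IsReturnWordUV (x : ℤ → A) (u v w : List A) : Prop :=
  ∃ j k : ℤ, OccursAtZ x (u ++ v) j ∧ OccursAtZ x (u ++ v) k ∧ j < k ∧
    (∀ i : ℤ, j < i → i < k → ¬ OccursAtZ x (u ++ v) i) ∧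
    w = zSeg x (j + u.length) (k + u.length)

/-- The substitution `σ` on `{a,b,c} = {0,1,2}`: `σ(a)=acb`, `σ(b)=bab`, `σ(c)=cbc`. -/
def sigma3 : Fin 3 → List (Fin 3) := ![[0, 2, 1], [1, 0, 1], [2, 1, 2]]

/-- The substitution `τ` on `{a,b,c} = {0,1,2}`: `τ(a)=abc`, `τ(b)=acb`, `τ(c)=aac`. -/
def tau3 : Fin 3 → List (Fin 3) := ![[0, 1, 2], [0, 2, 1], [0, 0, 2]]

/-- `rho n = σ τ σ² τ ⋯ σⁿ τ` (identity for `n = 0`). -/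
def rho : ℕ → Fin 3 → List (Fin 3)
  | 0 => fun b => [b]
  | n + 1 => compM (rho n) (compM (powM sigma3 (n + 1)) tau3)

/-- `psi n l = σ^{n+2} τ σ^{n+3} τ ⋯ σ^{n+l+1} τ` (identity for `l = 0`). -/
def psi (n : ℕ) : ℕ → Fin 3 → List (Fin 3)
  | 0 => fun b => [b]
  | l + 1 => compM (psi n l) (compM (powM sigma3 (n + 2 + l)) tau3)

/-- The Sturmian substitution `τ` on `{0,1}`: `τ(0)=0`, `τ(1)=10`. -/
def tau2 : Fin 2 → List (Fin 2) := ![[0], [1, 0]]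

/-- The Sturmian substitution `σ` on `{0,1}`: `σ(0)=01`, `σ(1)=1`. -/
def sigma2 : Fin 2 → List (Fin 2) := ![[0, 1], [1]]

/-- `xi i k = τ^{i₁} σ^{i₂} τ^{i₃} ⋯ τ^{i_{2k-1}} σ^{i_{2k}}` (identity for `k = 0`). -/
def xi (i : ℕ → ℕ) : ℕ → Fin 2 → List (Fin 2)
  | 0 => fun b => [b]
  | k + 1 => compM (xi i k) (compM (powM tau2 (i (2 * k + 1))) (powM sigma2 (i (2 * k + 2))))

/-- `a : ℕ → ℕ` gives (from index 1 on) the continued fraction expansion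
`α = [0; a₁, a₂, a₃, …]`, expressed through the Gauss map. -/
def IsCFExpansion (α : ℝ) (a : ℕ → ℕ) : Prop :=
  ∃ β : ℕ → ℝ, β 0 = α ∧ ∀ n : ℕ,
    0 < β n ∧ β n < 1 ∧ (a (n + 1) : ℤ) = ⌊1 / β n⌋ ∧ β (n + 1) = 1 / β n - ⌊1 / β n⌋

/-! ### general lemmas -/

theorem wordMap_append (φ : A → List B) : ∀ u v : List A,
    wordMap φ (u ++ v) = wordMap φ u ++ wordMap φ v := by
  intro u v; induction u with
  | nil => rfl
  | cons a u ih => simp [wordMap, ih]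

theorem wordMap_congr {φ ψ : A → List B} (h : ∀ b, φ b = ψ b) :
    ∀ u, wordMap φ u = wordMap ψ u := by
  intro u; induction u with
  | nil => rfl
  | cons a u ih => simp [wordMap, ih, h]

theorem wordMap_wordMap (φ : B → List A) (ψ : A → List B) :
    ∀ u, wordMap φ (wordMap ψ u) = wordMap (fun b => wordMap φ (ψ b)) u := by
  intro u; induction u with
  | nil => rfl
  | cons a u ih => simp [wordMap, wordMap_append, ih]

theorem wordMap_length_le {φ : A → List B} {Q : ℕ} (h : ∀ b, (φ b).length ≤ Q) :
    ∀ u : List A, (wordMap φ u).length ≤ Q * u.length := by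
  intro u; induction u with
  | nil => simp [wordMap]
  | cons a u ih =>
    simp only [wordMap, List.length_append, List.length_cons]
    have := h a; nlinarith

theorem le_wordMap_length {φ : A → List B} {q : ℕ} (h : ∀ b, q ≤ (φ b).length) :
    ∀ u : List A, q * u.length ≤ (wordMap φ u).length := by
  intro u; induction u with
  | nil => simp [wordMap]
  | cons a u ih =>
    simp only [wordMap, List.length_append, List.length_cons]
    have := h a; nlinarith

theorem wordMap_prefix (φ : A → List B) {u v : List A} (h : u <+: v) :
    wordMap φ u <+: wordMap φ v := by
  obtain ⟨t, rfl⟩ := h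
  exact ⟨wordMap φ t, (wordMap_append φ u t).symm⟩

@[simp] theorem seqTake_length (x : ℕ → A) (n : ℕ) : (seqTake x n).length = n := by
  simp [seqTake]

theorem seqTake_getElem (x : ℕ → A) (n t : ℕ) (h : t < (seqTake x n).length) :
    (seqTake x n)[t] = x t := by
  simp [seqTake]

@[simp] theorem seqTake_zero (x : ℕ → A) : seqTake x 0 = [] := rfl

theorem seqTake_succ (x : ℕ → A) (n : ℕ) : seqTake x (n + 1) = seqTake x n ++ [x n] := by
  simp [seqTake, List.range_succ]

theorem seqTake_prefix (x : ℕ → A) {m n : ℕ} (h : m ≤ n) :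
    seqTake x m <+: seqTake x n := by
  rw [List.prefix_iff_eq_take]
  apply List.ext_getElem
  · simp [h]
  · intro t h1 h2
    rw [seqTake_getElem, List.getElem_take, seqTake_getElem]

/-- A word is a prefix of the sequence `x`. -/
def PrefOf (x : ℕ → A) (w : List A) : Prop := seqTake x w.length = w

theorem getElem_congr_list {l₁ l₂ : List A} (h : l₁ = l₂) (t : ℕ) (h₁ : t < l₁.length)
    (h₂ : t < l₂.length) : l₁[t] = l₂[t] := by subst h; rfl

theorem prefOf_iff_getElem {x : ℕ → A} {w : List A} :
    PrefOf x w ↔ ∀ t (h : t < w.length), w[t] = x t := by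
  constructor
  · intro hp t h
    have h2 := getElem_congr_list hp t (by simpa using h) h
    rw [← h2, seqTake_getElem]
  · intro hg
    apply List.ext_getElem (by simp)
    intro t h1 h2
    rw [seqTake_getElem, hg]

theorem PrefOf.mono {x : ℕ → A} {u w : List A} (h : PrefOf x w) (hp : u <+: w) :
    PrefOf x u := by
  rw [prefOf_iff_getElem] at h ⊢
  intro t ht
  rw [hp.getElem ht, h t (lt_of_lt_of_le ht hp.length_le)]

theorem occursAt_iff_getElem {x : ℕ → A} {u : List A} {s : ℕ} :
    OccursAt x u s ↔ ∀ t (h : t < u.length), u[t] = x (s + t) := by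
  constructor
  · intro h t ht
    have := h ⟨t, ht⟩
    rw [List.get_eq_getElem] at this
    exact this.symm
  · intro h k
    rw [List.get_eq_getElem, h _ k.2]

theorem occursAt_of_prefOf_append {x : ℕ → A} {a u : List A} (h : PrefOf x (a ++ u)) :
    OccursAt x u a.length := by
  rw [prefOf_iff_getElem] at h
  rw [occursAt_iff_getElem]
  intro t ht
  have hk : a.length + t < (a ++ u).length := by
    simp only [List.length_append]; omega
  have h2 := h _ hk
  rw [List.getElem_append_right (by omega)] at h2
  rw [← h2]
  congr 1; omega

theorem prefOf_occursAt_zero {x : ℕ → A} {w : List A} (h : PrefOf x w) :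
    OccursAt x w 0 := by
  have : w = ([] : List A) ++ w := rfl
  rw [this] at h
  simpa using occursAt_of_prefOf_append h

/-- Extract: if `w` occurs at `s`, `u` occurs at `t`, and `[t, t+|u|) ⊆ [s, s+|w|)`,
then `u` is a prefix of `w.drop (t - s)`. -/
theorem prefix_drop_of_occursAt {x : ℕ → A} {w u : List A} {s t : ℕ}
    (hw : OccursAt x w s) (hu : OccursAt x u t) (hst : s ≤ t)
    (hlen : t + u.length ≤ s + w.length) : u <+: w.drop (t - s) := by
  rw [occursAt_iff_getElem] at hw hu
  rw [List.prefix_iff_eq_take]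
  apply List.ext_getElem
  · simp; omega
  · intro n h1 h2
    have hn : n < u.length := h1
    have hdn : (t - s) + n < w.length := by omega
    rw [List.getElem_take, List.getElem_drop]
    rw [hw _ (by omega), hu _ hn]
    congr 1; omega

/-- Transfer: if `w` occurs at `s` and `u <+: w.drop d` with `d + |u| ≤ |w|`,
then `u` occurs at `s + d`. -/
theorem occursAt_of_prefix_drop {x : ℕ → A} {w u : List A} {s d : ℕ}
    (hw : OccursAt x w s) (hp : u <+: w.drop d) (hd : d + u.length ≤ w.length) :
    OccursAt x u (s + d) := by
  rw [occursAt_iff_getElem] at hw ⊢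
  intro t ht
  have h1 : t < (w.drop d).length := by simp; omega
  rw [hp.getElem ht, List.getElem_drop, hw _ (by omega)]
  congr 1; omega

/-! ### sequence images -/

theorem seqTake_append_of_occursAt {z : ℕ → A} {v : List A} {m : ℕ}
    (hv : OccursAt z v m) : seqTake z (m + v.length) = seqTake z m ++ v := by
  rw [occursAt_iff_getElem] at hv
  apply List.ext_getElem
  · simp
  · intro t h1 h2
    rw [seqTake_getElem]
    by_cases ht : t < m
    · rw [List.getElem_append_left (by simpa using ht), seqTake_getElem]
    · rw [List.getElem_append_right (by simpa using ht)]
      simp only [seqTake_length]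
      rw [hv (t - m) (by simp at h1; omega)]
      congr 1
      omega

/-- Position of the `m`-th block of the `φ`-image of `z`. -/
def posArr (φ : A → List A) (z : ℕ → A) (m : ℕ) : ℕ := (wordMap φ (seqTake z m)).length

@[simp] theorem posArr_zero (φ : A → List A) (z : ℕ → A) : posArr φ z 0 = 0 := rfl

theorem posArr_succ (φ : A → List A) (z : ℕ → A) (m : ℕ) :
    posArr φ z (m + 1) = posArr φ z m + (φ (z m)).length := by
  simp [posArr, seqTake_succ, wordMap_append, wordMap]

theorem posArr_mono (φ : A → List A) (z : ℕ → A) {m m' : ℕ} (h : m ≤ m') :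
    posArr φ z m ≤ posArr φ z m' := by
  induction m' with
  | zero => rw [Nat.le_zero.mp h]
  | succ k ih =>
    rcases Nat.lt_or_ge m (k+1) with h'|h'
    · exact le_trans (ih (by omega)) (by rw [posArr_succ]; omega)
    · have : m = k + 1 := by omega
      subst this; rfl

theorem le_posArr {φ : A → List A} {z : ℕ → A} (hq : ∀ b, 1 ≤ (φ b).length) (m : ℕ) :
    m ≤ posArr φ z m := by
  induction m with
  | zero => simp
  | succ k ih => rw [posArr_succ]; have := hq (z k); omega

theorem posArr_add_le {φ : A → List A} {z : ℕ → A} {Q : ℕ} (hQ : ∀ b, (φ b).length ≤ Q)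
    (m q : ℕ) : posArr φ z (m + q) ≤ posArr φ z m + q * Q := by
  induction q with
  | zero => simp
  | succ k ih =>
    rw [show m + (k+1) = (m+k) + 1 by omega, posArr_succ]
    have := hQ (z (m+k)); nlinarith

theorem exists_posArr_window {φ : A → List A} {z : ℕ → A} {Q : ℕ}
    (hq : ∀ b, 1 ≤ (φ b).length) (hQ : ∀ b, (φ b).length ≤ Q) (i : ℕ) :
    ∃ m, i ≤ posArr φ z m ∧ posArr φ z m ≤ i + Q := by
  have hex : ∃ m, i ≤ posArr φ z m := ⟨i, le_posArr hq i⟩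
  classical
  set m := Nat.find hex with hm
  refine ⟨m, Nat.find_spec hex, ?_⟩
  rcases Nat.eq_zero_or_pos m with h0 | h0
  · rw [h0]; simp only [posArr_zero]; omega
  · have hlt : ¬ i ≤ posArr φ z (m - 1) := Nat.find_min hex (by omega)
    have : posArr φ z m ≤ posArr φ z (m-1) + (φ (z (m-1))).length := by
      rw [← posArr_succ]
      exact posArr_mono φ z (by omega)
    have := hQ (z (m-1))
    omega

theorem exists_posArr_le {φ : A → List A} {z : ℕ → A}
    (hq : ∀ b, 1 ≤ (φ b).length) (t : ℕ) :
    ∃ m, posArr φ z m ≤ t ∧ t < posArr φ z (m + 1) := by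
  have hex : ∃ m, t < posArr φ z (m + 1) := ⟨t, by have := le_posArr (z := z) hq (t+1); omega⟩
  classical
  set m := Nat.find hex with hm
  refine ⟨m, ?_, Nat.find_spec hex⟩
  rcases Nat.eq_zero_or_pos m with h0 | h0
  · rw [h0]; simp
  · have hlt : ¬ t < posArr φ z (m - 1 + 1) := Nat.find_min hex (by omega)
    have : m - 1 + 1 = m := by omega
    rw [this] at hlt
    omega

theorem prefOf_of_seqImage {φ : A → List A} {z y : ℕ → A} (h : IsSeqImage φ z y) (m : ℕ) :
    PrefOf y (wordMap φ (seqTake z m)) := h m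

theorem occursAt_image {φ : A → List A} {z y : ℕ → A} (h : IsSeqImage φ z y)
    {v : List A} {m : ℕ} (hv : OccursAt z v m) :
    OccursAt y (wordMap φ v) (posArr φ z m) := by
  have h1 : seqTake z (m + v.length) = seqTake z m ++ v := seqTake_append_of_occursAt hv
  have h2 : PrefOf y (wordMap φ (seqTake z m) ++ wordMap φ v) := by
    have := prefOf_of_seqImage h (m + v.length)
    rwa [h1, wordMap_append] at this
  exact occursAt_of_prefOf_append h2

theorem occursAt_pair (z : ℕ → A) (m : ℕ) : OccursAt z [z m, z (m + 1)] m := by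
  rw [occursAt_iff_getElem]
  intro t ht
  simp only [List.length_cons, List.length_nil] at ht
  interval_cases t <;> simp

theorem occursAt_double_block {φ : A → List A} {z y : ℕ → A} (h : IsSeqImage φ z y)
    (m : ℕ) : OccursAt y (φ (z m) ++ φ (z (m + 1))) (posArr φ z m) := by
  have := occursAt_image h (occursAt_pair z m)
  simpa [wordMap] using this

/-- Claim A: every occurrence of a short word lies inside the image of two
consecutive letters. -/
theorem occurs_in_double_block {φ : A → List A} {z y : ℕ → A} (h : IsSeqImage φ z y)
    {u : List A} {t : ℕ} (hu : OccursAt y u t)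
    (hlen : ∀ b, u.length ≤ (φ b).length) (hq : ∀ b, 1 ≤ (φ b).length) :
    ∃ m d, t = posArr φ z m + d ∧
      d + u.length ≤ (φ (z m) ++ φ (z (m + 1))).length ∧
      u <+: (φ (z m) ++ φ (z (m + 1))).drop d := by
  obtain ⟨m, hm1, hm2⟩ := exists_posArr_le (z := z) hq t
  refine ⟨m, t - posArr φ z m, by omega, ?_, ?_⟩
  · rw [posArr_succ] at hm2
    simp only [List.length_append]
    have := hlen (z (m+1))
    omega
  · have hw := occursAt_double_block h m
    have : t + u.length ≤ posArr φ z m + (φ (z m) ++ φ (z (m + 1))).length := by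
      rw [posArr_succ] at hm2
      simp only [List.length_append]
      have := hlen (z (m+1))
      omega
    exact prefix_drop_of_occursAt hw hu hm1 this

/-! ### explicit substitution computations -/

theorem fin2_cases (b : Fin 2) : b = 0 ∨ b = 1 := by omega

theorem wordMap_id : ∀ w : List A, wordMap (fun c => [c]) w = w := by
  intro w; induction w with
  | nil => rfl
  | cons a w ih => simp [wordMap, ih]

theorem wordMap_replicate (φ : A → List B) (a : A) :
    ∀ n, wordMap φ (List.replicate n a) = (List.replicate n (φ a)).flatten := by
  intro n; induction n with
  | zero => rfl
  | succ k ih => simp [List.replicate_succ, wordMap, ih]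

theorem join_replicate_length (w : List A) :
    ∀ n, ((List.replicate n w).flatten).length = n * w.length := by
  intro n; induction n with
  | zero => simp
  | succ k ih => simp [List.replicate_succ, ih]; ring

theorem length_wordMap_replicate (φ : A → List B) (a : A) (n : ℕ) :
    (wordMap φ (List.replicate n a)).length = n * (φ a).length := by
  rw [wordMap_replicate, join_replicate_length]

theorem wordMap_join_replicate (φ : A → List B) (w : List A) :
    ∀ n, wordMap φ ((List.replicate n w).flatten) =
      (List.replicate n (wordMap φ w)).flatten := by
  intro n; induction n with
  | zero => rfl
  | succ k ih => simp [List.replicate_succ, wordMap_append, ih]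

@[simp] theorem tau2_zero : tau2 0 = [0] := rfl
@[simp] theorem tau2_one : tau2 1 = [1, 0] := rfl
@[simp] theorem sigma2_zero : sigma2 0 = [0, 1] := rfl
@[simp] theorem sigma2_one : sigma2 1 = [1] := rfl

theorem wordMap_sigma2_rep (l : ℕ) :
    wordMap sigma2 (List.replicate l 1) = List.replicate l 1 := by
  induction l with
  | zero => rfl
  | succ k ih => simp [List.replicate_succ, wordMap, ih]

theorem wordMap_tau2_rep (j : ℕ) :
    wordMap tau2 (List.replicate j 0) = List.replicate j 0 := by
  induction j with
  | zero => rfl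
  | succ k ih => simp [List.replicate_succ, wordMap, ih]

theorem powM_sigma2_zero : ∀ l, powM sigma2 l 0 = 0 :: List.replicate l 1 := by
  intro l; induction l with
  | zero => rfl
  | succ k ih =>
    show wordMap sigma2 (powM sigma2 k 0) = _
    rw [ih]
    show sigma2 0 ++ wordMap sigma2 (List.replicate k 1) = _
    rw [wordMap_sigma2_rep]
    simp [List.replicate_succ]

theorem powM_sigma2_one : ∀ l, powM sigma2 l 1 = [1] := by
  intro l; induction l with
  | zero => rfl
  | succ k ih =>
    show wordMap sigma2 (powM sigma2 k 1) = _
    rw [ih]; rfl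

theorem powM_tau2_zero : ∀ j, powM tau2 j 0 = [0] := by
  intro j; induction j with
  | zero => rfl
  | succ k ih =>
    show wordMap tau2 (powM tau2 k 0) = _
    rw [ih]; rfl

theorem powM_tau2_one : ∀ j, powM tau2 j 1 = 1 :: List.replicate j 0 := by
  intro j; induction j with
  | zero => rfl
  | succ k ih =>
    show wordMap tau2 (powM tau2 k 1) = _
    rw [ih]
    show tau2 1 ++ wordMap tau2 (List.replicate k 0) = _
    rw [wordMap_tau2_rep]
    simp [List.replicate_succ]

/-- The one-step substitutions in the directive sequence. -/
def zeta (i : ℕ → ℕ) (k : ℕ) : Fin 2 → List (Fin 2) :=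
  compM (powM tau2 (i (2 * k + 1))) (powM sigma2 (i (2 * k + 2)))

theorem zeta_one (i : ℕ → ℕ) (k : ℕ) :
    zeta i k 1 = 1 :: List.replicate (i (2 * k + 1)) 0 := by
  show wordMap (powM tau2 (i (2*k+1))) (powM sigma2 (i (2*k+2)) 1) = _
  rw [powM_sigma2_one]
  show powM tau2 (i (2*k+1)) 1 ++ wordMap _ [] = _
  rw [powM_tau2_one]
  simp [wordMap]

theorem zeta_zero (i : ℕ → ℕ) (k : ℕ) :
    zeta i k 0 = 0 :: (List.replicate (i (2 * k + 2))
      (1 :: List.replicate (i (2 * k + 1)) 0)).flatten := by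
  show wordMap (powM tau2 (i (2*k+1))) (powM sigma2 (i (2*k+2)) 0) = _
  rw [powM_sigma2_zero]
  show powM tau2 (i (2*k+1)) 0 ++ wordMap _ (List.replicate _ 1) = _
  rw [powM_tau2_zero, wordMap_replicate, powM_tau2_one]
  rfl

theorem length_zeta_one (i : ℕ → ℕ) (k : ℕ) :
    (zeta i k 1).length = 1 + i (2 * k + 1) := by
  rw [zeta_one]; simp; omega

theorem length_zeta_zero (i : ℕ → ℕ) (k : ℕ) :
    (zeta i k 0).length = 1 + i (2 * k + 2) * (1 + i (2 * k + 1)) := by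
  rw [zeta_zero]
  simp only [List.length_cons, join_replicate_length, List.length_cons,
    List.length_replicate]
  ring

theorem xi_succ_apply (i : ℕ → ℕ) (k : ℕ) (b : Fin 2) :
    xi i (k + 1) b = wordMap (xi i k) (zeta i k b) := rfl

/-! ### the tower of sequences -/

theorem chain_zero_apply (σ : ℕ → A → List A) (r : ℕ) (b : A) :
    chain σ r 0 b = [b] := rfl

theorem chain_succ_apply (σ : ℕ → A → List A) (r n : ℕ) (b : A) :
    chain σ r (n + 1) b = wordMap (chain σ r n) (σ (r + n) b) := rfl

theorem chain_left (σ : ℕ → A → List A) (r : ℕ) :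
    ∀ n b, chain σ r (n + 1) b = wordMap (σ r) (chain σ (r + 1) n b) := by
  intro n
  induction n with
  | zero =>
    intro b
    rw [chain_succ_apply, chain_zero_apply]
    show wordMap (fun c => [c]) (σ (r + 0) b) = _
    rw [wordMap_id]
    show _ = σ r b ++ wordMap (σ r) []
    simp [wordMap]
  | succ n ih =>
    intro b
    rw [chain_succ_apply]
    rw [wordMap_congr ih]
    rw [← wordMap_wordMap]
    have h : r + (n + 1) = (r + 1) + n := by omega
    rw [h]
    rfl

theorem xi_eq_chain (i : ℕ → ℕ) : ∀ k b, xi i k b = chain (zeta i) 0 k b := by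
  intro k
  induction k with
  | zero => intro b; rfl
  | succ k ih =>
    intro b
    rw [xi_succ_apply, chain_succ_apply, wordMap_congr ih]
    congr 2
    omega

/-- Level-`k` approximations. -/
def V (i : ℕ → ℕ) (k m : ℕ) : List (Fin 2) := chain (zeta i) k m 0

theorem V_succ_left (i : ℕ → ℕ) (k m : ℕ) :
    V i k (m + 1) = wordMap (zeta i k) (V i (k + 1) m) := chain_left (zeta i) k m 0

theorem V_prefix_succ (i : ℕ → ℕ) (k m : ℕ) : V i k m <+: V i k (m + 1) := by
  show V i k m <+: chain (zeta i) k (m+1) 0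
  rw [chain_succ_apply, zeta_zero]
  show _ <+: wordMap (chain (zeta i) k m) (0 :: _)
  show _ <+: chain (zeta i) k m 0 ++ _
  exact ⟨_, rfl⟩

theorem V_prefix (i : ℕ → ℕ) (k : ℕ) {m M : ℕ} (h : m ≤ M) : V i k m <+: V i k M := by
  induction M with
  | zero => rw [Nat.le_zero.mp h]
  | succ n ih =>
    rcases Nat.lt_or_ge m (n+1) with h' | h'
    · exact (ih (by omega)).trans (V_prefix_succ i k n)
    · have : m = n + 1 := by omega
      rw [this]

section Tower

variable {i : ℕ → ℕ} (hp : ∀ n, 1 ≤ i (n + 1))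
include hp

theorem zeta_length_ge (k : ℕ) : ∀ b, 2 ≤ (zeta i k b).length := by
  intro b
  rcases fin2_cases b with rfl | rfl
  · rw [length_zeta_zero]
    have h1 := hp (2 * k + 1)
    have h2 := hp (2 * k)
    have : i (2*k+2) = i (2*k+1+1) := by ring_nf
    nlinarith [hp (2*k+1), hp (2*k)]
  · rw [length_zeta_one]
    have := hp (2 * k)
    omega

theorem V_length_ge (m : ℕ) : ∀ k, 2 ^ m ≤ (V i k m).length := by
  induction m with
  | zero => intro k; simp [V, chain_zero_apply]
  | succ m ih =>
    intro k
    rw [V_succ_left]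
    calc (2:ℕ) ^ (m+1) = 2 * 2 ^ m := by ring
    _ ≤ 2 * (V i (k+1) m).length := by have := ih (k+1); omega
    _ ≤ _ := le_wordMap_length (zeta_length_ge hp k) _

theorem V_length_gt (m k : ℕ) : m < (V i k (m + 1)).length := by
  have h1 := V_length_ge hp (m + 1) k
  have h2 : m + 1 < 2 ^ (m + 1) := Nat.lt_two_pow_self
  omega

/-- The level-`k` sequence of the tower. -/
def ylev (i : ℕ → ℕ) (k : ℕ) : ℕ → Fin 2 := fun m => (V i (k) (m + 1)).getD m 0

theorem ylev_eq_V (k : ℕ) {M m : ℕ} (h : m < (V i k M).length) :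
    ylev i k m = (V i k M)[m] := by
  show (V i k (m+1)).getD m 0 = _
  rw [List.getD_eq_getElem _ _ (V_length_gt hp m k)]
  rcases Nat.le_total (m+1) M with hM | hM
  · exact (V_prefix i k hM).getElem (V_length_gt hp m k)
  · exact ((V_prefix i k hM).getElem h).symm

theorem prefOf_V (k M : ℕ) : PrefOf (ylev i k) (V i k M) := by
  rw [prefOf_iff_getElem]
  intro t h
  exact (ylev_eq_V hp k h).symm

omit hp in theorem seqTake_eq_take (x : ℕ → A) {n N : ℕ} (h : n ≤ N) :
    seqTake x n = (seqTake x N).take n := by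
  have := List.prefix_iff_eq_take.mp (seqTake_prefix x h)
  rwa [seqTake_length] at this

theorem seqTake_ylev_prefix (k n : ℕ) : seqTake (ylev i k) n <+: V i k n := by
  have hlen : n ≤ (V i k n).length := by
    have := V_length_ge hp n k
    have := (Nat.lt_two_pow_self (n := n))
    omega
  have h1 : seqTake (ylev i k) (V i k n).length = V i k n := prefOf_V hp k n
  rw [seqTake_eq_take (ylev i k) hlen, h1]
  exact List.take_prefix _ _

theorem isSeqImage_step (k : ℕ) : IsSeqImage (zeta i k) (ylev i (k + 1)) (ylev i k) := by
  intro n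
  have h1 : wordMap (zeta i k) (seqTake (ylev i (k+1)) n) <+: V i k (n + 1) := by
    rw [V_succ_left]
    exact wordMap_prefix _ (seqTake_ylev_prefix hp (k+1) n)
  exact PrefOf.mono (prefOf_V hp k (n+1)) h1

omit hp in theorem isSeqImage_comp {φ ψ : A → List A} {z w y : ℕ → A}
    (h1 : IsSeqImage φ z y) (h2 : IsSeqImage ψ w z) :
    IsSeqImage (fun b => wordMap φ (ψ b)) w y := by
  intro n
  have hz := h2 n
  have h3 := h1 (wordMap ψ (seqTake w n)).length
  rw [hz] at h3
  rw [wordMap_wordMap] at h3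
  exact h3

omit hp in theorem isSeqImage_id (z : ℕ → A) : IsSeqImage (fun b => [b]) z z := by
  intro n
  rw [wordMap_id, seqTake_length]

theorem isSeqImage_xi : ∀ k, IsSeqImage (xi i k) (ylev i k) (ylev i 0) := by
  intro k
  induction k with
  | zero => exact isSeqImage_id _
  | succ k ih =>
    have := isSeqImage_comp ih (isSeqImage_step hp k)
    exact this

/-! ### no factor `11` -/

/-- No two consecutive ones. -/
def R2 : Fin 2 → Fin 2 → Prop := fun a b => a = 0 ∨ b = 0

omit hp in
theorem wordMap_ne_nil {φ : Fin 2 → List (Fin 2)} (h : ∀ b, φ b ≠ []) {w : List (Fin 2)}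
    (hw : w ≠ []) : wordMap φ w ≠ [] := by
  cases w with
  | nil => exact absurd rfl hw
  | cons a w =>
    show φ a ++ _ ≠ []
    simp [h a]

omit hp in
theorem blockChain {φ : Fin 2 → List (Fin 2)} (h1 : ∀ b, List.IsChain R2 (φ b))
    (h2 : ∀ b, (φ b).getLast? = some 0) :
    ∀ w, List.IsChain R2 (wordMap φ w) ∧ (w ≠ [] → (wordMap φ w).getLast? = some 0) := by
  have hne : ∀ b, φ b ≠ [] := by
    intro b hb
    have := h2 b
    rw [hb] at this
    simp at this
  intro w
  induction w with
  | nil => exact ⟨List.isChain_nil, fun h => absurd rfl h⟩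
  | cons a w ih =>
    constructor
    · show List.IsChain R2 (φ a ++ wordMap φ w)
      rw [List.isChain_append]
      refine ⟨h1 a, ih.1, ?_⟩
      intro x hx y hy
      rw [h2 a] at hx
      simp at hx
      exact Or.inl hx.symm
    · intro _
      show (φ a ++ wordMap φ w).getLast? = some 0
      by_cases hw : w = []
      · subst hw
        rw [show wordMap φ ([] : List (Fin 2)) = [] from rfl, List.append_nil]
        exact h2 a
      · rw [List.getLast?_append_of_ne_nil _ (wordMap_ne_nil hne hw)]
        exact ih.2 hw

omit hp in
theorem chain'_cons_replicate_zero (a : Fin 2) (n : ℕ) :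
    List.IsChain R2 (a :: List.replicate n 0) := by
  induction n generalizing a with
  | zero => simp
  | succ k ih =>
    rw [List.replicate_succ]
    exact List.IsChain.cons_cons (Or.inr rfl) (ih 0)

theorem zeta_chain' (k : ℕ) : ∀ b, List.IsChain R2 (zeta i k b) ∧
    (zeta i k b).getLast? = some 0 := by
  have hj : 1 ≤ i (2 * k + 1) := hp (2 * k)
  have htau : ∀ b, List.IsChain R2 (powM tau2 (i (2*k+1)) b) ∧
      (powM tau2 (i (2*k+1)) b).getLast? = some 0 := by
    intro b
    rcases fin2_cases b with rfl | rfl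
    · rw [powM_tau2_zero]; exact ⟨by simp, rfl⟩
    · rw [powM_tau2_one]
      refine ⟨chain'_cons_replicate_zero 1 _, ?_⟩
      obtain ⟨j, hjj⟩ : ∃ j, i (2*k+1) = j + 1 := ⟨i (2*k+1) - 1, by omega⟩
      rw [hjj]
      rw [show (1 : Fin 2) :: List.replicate (j+1) 0 = (1 :: List.replicate j 0) ++ [0] by
        rw [List.replicate_succ']
        simp]
      rw [List.getLast?_concat]
  have hbc := blockChain (fun b => (htau b).1) (fun b => (htau b).2)
  intro b
  have hne : powM sigma2 (i (2*k+2)) b ≠ [] := by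
    rcases fin2_cases b with rfl | rfl
    · rw [powM_sigma2_zero]; simp
    · rw [powM_sigma2_one]; simp
  exact ⟨(hbc (powM sigma2 (i (2*k+2)) b)).1, (hbc (powM sigma2 (i (2*k+2)) b)).2 hne⟩

theorem wordMap_zeta_chain' (k : ℕ) (w : List (Fin 2)) :
    List.IsChain R2 (wordMap (zeta i k) w) :=
  (blockChain (fun b => (zeta_chain' hp k b).1) (fun b => (zeta_chain' hp k b).2) w).1

theorem ylev_not_eleven (k m : ℕ) : ¬ (ylev i k m = 1 ∧ ylev i k (m + 1) = 1) := by
  rintro ⟨h1, h2⟩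
  have hlen : m + 1 < (V i k (m + 2)).length := by
    have := V_length_ge hp (m + 2) k
    have h4 : m + 2 < 2 ^ (m + 2) := Nat.lt_two_pow_self
    omega
  have hchain : List.IsChain R2 (V i k (m + 2)) := by
    rw [V_succ_left]
    exact wordMap_zeta_chain' hp k _
  rw [List.isChain_iff_getElem] at hchain
  have := hchain m (by omega)
  rw [← ylev_eq_V hp k (M := m + 2) (by omega)] at this
  rw [← ylev_eq_V hp k (M := m + 2) (by omega)] at this
  rw [h1, h2] at this
  rcases this with h | h <;> exact absurd h (by decide)

/-! ### occurrences of two-letter words -/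

omit hp in
theorem replicate_append_cons_self (a : Fin 2) (n : ℕ) (l : List (Fin 2)) :
    List.replicate n a ++ a :: l = a :: (List.replicate n a ++ l) := by
  induction n with
  | zero => rfl
  | succ k ih => simp [List.replicate_succ, ih]

theorem z1z0_decomp (k : ℕ) : ∃ s, zeta i k 1 ++ zeta i k 0 =
    1 :: (List.replicate (i (2 * k + 1) + 1) 0 ++ 1 :: s) := by
  have hl : 1 ≤ i (2 * k + 2) := hp (2 * k + 1)
  obtain ⟨l₀, hl₀⟩ : ∃ l₀, i (2 * k + 2) = l₀ + 1 := ⟨i (2 * k + 2) - 1, by omega⟩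
  refine ⟨List.replicate (i (2 * k + 1)) 0 ++
    (List.replicate l₀ ((1 : Fin 2) :: List.replicate (i (2 * k + 1)) 0)).flatten, ?_⟩
  rw [zeta_one, zeta_zero, hl₀]
  simp [List.replicate_succ, List.replicate_succ' (n := i (2 * k + 1))]
  rw [replicate_append_cons_self]

theorem two_word_infix (k : ℕ) (b c : Fin 2) (hbc : ¬(b = 1 ∧ c = 1)) :
    [b, c] <:+: (zeta i k 1 ++ zeta i k 0) := by
  obtain ⟨s, hs⟩ := z1z0_decomp hp k
  have hj : 1 ≤ i (2 * k + 1) := hp (2 * k)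
  obtain ⟨j₀, hj₀⟩ : ∃ j₀, i (2 * k + 1) = j₀ + 1 := ⟨i (2 * k + 1) - 1, by omega⟩
  rw [hs, hj₀]
  rcases fin2_cases b with rfl | rfl <;> rcases fin2_cases c with rfl | rfl
  · -- [0, 0]
    refine ⟨[1], List.replicate j₀ 0 ++ 1 :: s, ?_⟩
    simp [List.replicate_succ, replicate_append_cons_self]
  · -- [0, 1]
    refine ⟨1 :: List.replicate (j₀ + 1) 0, s, ?_⟩
    simp [List.replicate_succ, replicate_append_cons_self]
  · -- [1, 0]
    refine ⟨[], List.replicate j₀ 0 ++ 0 :: 1 :: s, ?_⟩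
    simp [List.replicate_succ, replicate_append_cons_self]
  · exact absurd ⟨rfl, rfl⟩ hbc

theorem exists_decomp_10 (k : ℕ) (e : Fin 2) :
    ∃ a r, zeta i k e = a ++ ([1] ++ ([0] ++ r)) := by
  have hj : 1 ≤ i (2 * k + 1) := hp (2 * k)
  have hl : 1 ≤ i (2 * k + 2) := hp (2 * k + 1)
  obtain ⟨j₀, hj₀⟩ : ∃ j₀, i (2 * k + 1) = j₀ + 1 := ⟨i (2 * k + 1) - 1, by omega⟩
  obtain ⟨l₀, hl₀⟩ : ∃ l₀, i (2 * k + 2) = l₀ + 1 := ⟨i (2 * k + 2) - 1, by omega⟩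
  rcases fin2_cases e with rfl | rfl
  · refine ⟨[0], List.replicate j₀ 0 ++
      (List.replicate l₀ ((1 : Fin 2) :: List.replicate (i (2 * k + 1)) 0)).flatten, ?_⟩
    rw [zeta_zero, hl₀]
    simp [List.replicate_succ]
    rw [hj₀]
    simp [List.replicate_succ]
  · refine ⟨[], List.replicate j₀ 0, ?_⟩
    rw [zeta_one, hj₀]
    simp [List.replicate_succ]

theorem z1z0_infix_double (k : ℕ) (e : Fin 2) :
    (zeta i k 1 ++ zeta i k 0) <:+: wordMap (zeta i k) (zeta i (k + 1) e) := by
  obtain ⟨a, r, har⟩ := exists_decomp_10 hp (k + 1) e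
  refine ⟨wordMap (zeta i k) a, wordMap (zeta i k) r, ?_⟩
  rw [har]
  simp [wordMap_append, wordMap]

variable {Bb : ℕ} (hB : ∀ n, i (n + 1) ≤ Bb)

/-- the constant bounding block lengths. -/
def Cc (Bb : ℕ) : ℕ := Bb * Bb + Bb + 1

include hB

theorem zeta_length_le (k : ℕ) : ∀ b, (zeta i k b).length ≤ Cc Bb := by
  intro b
  have h1 : i (2 * k + 1) ≤ Bb := by have := hB (2 * k); simpa using this
  have h2 : i (2 * k + 2) ≤ Bb := by have := hB (2 * k + 1); simpa using this
  rcases fin2_cases b with rfl | rfl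
  · rw [length_zeta_zero, Cc]; nlinarith
  · rw [length_zeta_one, Cc]; nlinarith

theorem two_word_syndetic (k : ℕ) (b c : Fin 2) (hbc : ¬(b = 1 ∧ c = 1)) (p : ℕ) :
    ∃ m', p ≤ m' ∧ m' ≤ p + 2 * (Cc Bb * Cc Bb) ∧ OccursAt (ylev i k) [b, c] m' := by
  set η : Fin 2 → List (Fin 2) := fun e => wordMap (zeta i k) (zeta i (k + 1) e) with hη
  have himg2 : IsSeqImage η (ylev i (k + 2)) (ylev i k) :=
    isSeqImage_comp (isSeqImage_step hp k) (isSeqImage_step hp (k + 1))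
  have hq : ∀ e, 1 ≤ (η e).length := by
    intro e
    have h1 := le_wordMap_length (zeta_length_ge hp k) (zeta i (k + 1) e)
    have h2 := zeta_length_ge hp (k + 1) e
    rw [hη]
    nlinarith
  have hQ : ∀ e, (η e).length ≤ Cc Bb * Cc Bb := by
    intro e
    have h1 := wordMap_length_le (zeta_length_le hp hB k) (zeta i (k + 1) e)
    have h2 := zeta_length_le hp hB (k + 1) e
    rw [hη]
    nlinarith
  obtain ⟨m, hm1, hm2⟩ := exists_posArr_window (z := ylev i (k + 2)) hq hQ p
  set e := ylev i (k + 2) m with he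
  have hocc : OccursAt (ylev i k) (η e) (posArr η (ylev i (k + 2)) m) := by
    have h1 : OccursAt (ylev i (k + 2)) [e] m := by
      rw [occursAt_iff_getElem]
      intro t ht
      simp only [List.length_cons, List.length_nil] at ht
      interval_cases t <;> simp [he]
    have h2 := occursAt_image himg2 h1
    have h3 : wordMap η [e] = η e := by simp [wordMap]
    rwa [h3] at h2
  have hinf : [b, c] <:+: η e :=
    (two_word_infix hp k b c hbc).trans (z1z0_infix_double hp k e)
  obtain ⟨s, t, hst⟩ := hinf
  have hd2 : s.length + 2 ≤ (η e).length := by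
    rw [← hst]
    simp only [List.length_append, List.length_cons, List.length_nil]
    omega
  have hdrop : [b, c] <+: (η e).drop s.length := by
    rw [← hst, List.append_assoc, List.drop_left]
    exact ⟨t, rfl⟩
  have hfin := occursAt_of_prefix_drop hocc hdrop (by simpa using hd2)
  refine ⟨posArr η (ylev i (k + 2)) m + s.length, by omega, ?_, hfin⟩
  have := hQ e
  omega

/-! ### length accounting -/

omit hp hB in
theorem xi_len_one_succ (k : ℕ) : (xi i (k + 1) 1).length =
    (xi i k 1).length + i (2 * k + 1) * (xi i k 0).length := by
  rw [xi_succ_apply, zeta_one]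
  show (xi i k 1 ++ wordMap (xi i k) (List.replicate (i (2*k+1)) 0)).length = _
  rw [List.length_append, length_wordMap_replicate]

omit hp hB in
theorem xi_len_zero_succ (k : ℕ) : (xi i (k + 1) 0).length =
    (xi i k 0).length + i (2 * k + 2) *
      ((xi i k 1).length + i (2 * k + 1) * (xi i k 0).length) := by
  rw [xi_succ_apply, zeta_zero]
  show (xi i k 0 ++ wordMap (xi i k) ((List.replicate (i (2*k+2))
    ((1 : Fin 2) :: List.replicate (i (2*k+1)) 0)).flatten)).length = _
  rw [List.length_append, wordMap_join_replicate, join_replicate_length]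
  congr 2
  show (xi i k 1 ++ wordMap (xi i k) (List.replicate (i (2*k+1)) 0)).length = _
  rw [List.length_append, length_wordMap_replicate]

omit hp hB in
theorem xi_len_pos : ∀ k b, 1 ≤ (xi i k b).length := by
  intro k
  induction k with
  | zero => intro b; rfl
  | succ k ih =>
    intro b
    rcases fin2_cases b with rfl | rfl
    · rw [xi_len_zero_succ]; have := ih 0; omega
    · rw [xi_len_one_succ]; have := ih 1; omega

omit hB in
theorem xi_len_one_le_zero : ∀ k, (xi i k 1).length ≤ (xi i k 0).length := by
  intro k
  cases k with
  | zero => exact le_refl _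
  | succ k =>
    rw [xi_len_zero_succ, xi_len_one_succ]
    have hl : 1 ≤ i (2 * k + 2) := hp (2 * k + 1)
    have h0 := xi_len_pos (i := i) k 0
    have h1 := xi_len_pos (i := i) k 1
    have hX := Nat.le_mul_of_pos_left
      ((xi i k 1).length + i (2 * k + 1) * (xi i k 0).length) hl
    linarith

omit hB in
theorem xi_len_zero_le_B_succ (k : ℕ) :
    (xi i k 0).length ≤ (xi i (k + 1) 1).length := by
  rw [xi_len_one_succ]
  have hj : 1 ≤ i (2 * k + 1) := hp (2 * k)
  have h0 := xi_len_pos (i := i) k 0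
  have h1 := xi_len_pos (i := i) k 1
  nlinarith

omit hB in
theorem xi_len_B_grow : ∀ k, k + 1 ≤ (xi i k 1).length := by
  intro k
  induction k with
  | zero => rfl
  | succ k ih =>
    rw [xi_len_one_succ]
    have hj : 1 ≤ i (2 * k + 1) := hp (2 * k)
    have h0 := xi_len_pos (i := i) k 0
    nlinarith

theorem xi_len_zero_succ_le (k : ℕ) :
    (xi i (k + 1) 0).length ≤ Cc Bb * (xi i k 0).length := by
  rw [xi_len_zero_succ, Cc]
  have hj : i (2 * k + 1) ≤ Bb := by simpa using hB (2 * k)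
  have hl : i (2 * k + 2) ≤ Bb := by simpa using hB (2 * k + 1)
  have hba := xi_len_one_le_zero hp k
  have h0 := xi_len_pos (i := i) k 0
  have e1 : i (2 * k + 1) * (xi i k 0).length ≤ Bb * (xi i k 0).length :=
    Nat.mul_le_mul_right _ hj
  have e2 : (xi i k 1).length + i (2 * k + 1) * (xi i k 0).length ≤
      (xi i k 0).length + Bb * (xi i k 0).length := by omega
  have e3 := Nat.mul_le_mul hl e2
  calc (xi i k 0).length + i (2 * k + 2) *
        ((xi i k 1).length + i (2 * k + 1) * (xi i k 0).length)
      ≤ (xi i k 0).length + Bb * ((xi i k 0).length + Bb * (xi i k 0).length) := by omega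
    _ = (Bb * Bb + Bb + 1) * (xi i k 0).length := by ring

theorem xi_len_zero_le_C_one : ∀ k, (xi i k 0).length ≤ Cc Bb * (xi i k 1).length := by
  intro k
  cases k with
  | zero =>
    show 1 ≤ Cc Bb * 1
    rw [Cc]; nlinarith
  | succ k =>
    calc (xi i (k+1) 0).length ≤ Cc Bb * (xi i k 0).length := xi_len_zero_succ_le hp hB k
    _ ≤ Cc Bb * (xi i (k+1) 1).length :=
        Nat.mul_le_mul_left _ (xi_len_zero_le_B_succ hp k)

/-- Choice of the level adapted to a word length `n`. -/
theorem choose_level (n : ℕ) (hn : 1 ≤ n) :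
    ∃ k, n ≤ (xi i k 1).length ∧
      (xi i k 0).length ≤ Cc Bb * Cc Bb * n := by
  classical
  have hex : ∃ k, n ≤ (xi i k 1).length := ⟨n, by have := xi_len_B_grow hp n; omega⟩
  refine ⟨Nat.find hex, Nat.find_spec hex, ?_⟩
  have hC1 : 1 ≤ Cc Bb := by rw [Cc]; omega
  rcases Nat.eq_zero_or_pos (Nat.find hex) with h0 | h0
  · rw [h0]
    show (1:ℕ) ≤ _
    nlinarith
  · have hlt : ¬ n ≤ (xi i (Nat.find hex - 1) 1).length := Nat.find_min hex (by omega)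
    obtain ⟨k', hk'⟩ : ∃ k', Nat.find hex = k' + 1 := ⟨Nat.find hex - 1, by omega⟩
    rw [hk'] at hlt ⊢
    simp only [Nat.add_sub_cancel] at hlt
    calc (xi i (k' + 1) 0).length ≤ Cc Bb * (xi i k' 0).length := xi_len_zero_succ_le hp hB k'
    _ ≤ Cc Bb * (Cc Bb * (xi i k' 1).length) :=
        Nat.mul_le_mul_left _ (xi_len_zero_le_C_one hp hB k')
    _ = Cc Bb * Cc Bb * (xi i k' 1).length := by ring
    _ ≤ Cc Bb * Cc Bb * n := Nat.mul_le_mul_left _ (by omega)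

/-! ### the key linear-recurrence estimate -/

/-- The linear recurrence constant. -/
def KK (Bb : ℕ) : ℕ := Cc Bb * Cc Bb * (2 * (Cc Bb * Cc Bb) + 3) + 1

theorem star (u : List (Fin 2)) (hne : u ≠ []) (hocc : Occurs (ylev i 0) u) (p : ℕ) :
    ∃ t, p ≤ t ∧ t < p + KK Bb * u.length ∧ OccursAt (ylev i 0) u t := by
  have hn : 1 ≤ u.length := List.length_pos_of_ne_nil hne
  obtain ⟨k, hk1, hk2⟩ := choose_level hp hB u.length hn
  have himg := isSeqImage_xi hp k
  have hlenb : ∀ b, u.length ≤ (xi i k b).length := by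
    intro b
    rcases fin2_cases b with rfl | rfl
    · exact hk1.trans (xi_len_one_le_zero hp k)
    · exact hk1
  have hq1 : ∀ b, 1 ≤ (xi i k b).length := xi_len_pos k
  have hQA : ∀ b, (xi i k b).length ≤ (xi i k 0).length := by
    intro b
    rcases fin2_cases b with rfl | rfl
    · exact le_refl _
    · exact xi_len_one_le_zero hp k
  obtain ⟨t₀, ht₀⟩ := hocc
  obtain ⟨m₀, d, htd, hdlen, hdpref⟩ := occurs_in_double_block himg ht₀ hlenb hq1
  have hbc := ylev_not_eleven hp k m₀
  obtain ⟨m₁, hm11, hm12⟩ :=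
    exists_posArr_window (φ := xi i k) (z := ylev i k) hq1 hQA p
  obtain ⟨m', hm'1, hm'2, hm'occ⟩ := two_word_syndetic hp hB k _ _ hbc m₁
  have h2 : OccursAt (ylev i 0) (xi i k (ylev i k m₀) ++ xi i k (ylev i k (m₀ + 1)))
      (posArr (xi i k) (ylev i k) m') := by
    have h3 := occursAt_image himg hm'occ
    have h4 : wordMap (xi i k) [ylev i k m₀, ylev i k (m₀ + 1)] =
        xi i k (ylev i k m₀) ++ xi i k (ylev i k (m₀ + 1)) := by simp [wordMap]
    rwa [h4] at h3
  have hu' := occursAt_of_prefix_drop h2 hdpref hdlen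
  refine ⟨posArr (xi i k) (ylev i k) m' + d, ?_, ?_, hu'⟩
  · have := posArr_mono (xi i k) (ylev i k) hm'1
    omega
  · -- arithmetic
    have hE1 : posArr (xi i k) (ylev i k) m' ≤ posArr (xi i k) (ylev i k) m₁ +
        (2 * (Cc Bb * Cc Bb)) * (xi i k 0).length := by
      have h5 : m' = m₁ + (m' - m₁) := by omega
      have h6 := posArr_add_le (z := ylev i k) hQA m₁ (m' - m₁)
      have h7 : (m' - m₁) * (xi i k 0).length ≤
          (2 * (Cc Bb * Cc Bb)) * (xi i k 0).length :=
        Nat.mul_le_mul_right _ (by omega)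
      rw [← h5] at h6
      omega
    have hE1' : (2 * (Cc Bb * Cc Bb)) * (xi i k 0).length =
        2 * (Cc Bb * Cc Bb * (xi i k 0).length) := by ring
    have hE2 : d + 1 ≤ 2 * (xi i k 0).length := by
      have h8 := hQA (ylev i k m₀)
      have h9 := hQA (ylev i k (m₀ + 1))
      rw [List.length_append] at hdlen
      omega
    have hE3 : Cc Bb * Cc Bb * (xi i k 0).length ≤
        Cc Bb * Cc Bb * (Cc Bb * Cc Bb * u.length) := Nat.mul_le_mul_left _ hk2
    have hE5 : (Cc Bb * Cc Bb * (2 * (Cc Bb * Cc Bb) + 3) + 1) * u.length =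
        2 * (Cc Bb * Cc Bb * (Cc Bb * Cc Bb * u.length)) +
          3 * (Cc Bb * Cc Bb * u.length) + u.length := by ring
    rw [KK, hE5]
    omega

theorem ur_tower : UniformlyRecurrent (ylev i 0) := by
  intro u hu
  by_cases hne : u = []
  · subst hne
    refine ⟨1, fun p => ⟨p, le_refl _, by omega, ?_⟩⟩
    intro k
    exact absurd k.2 (by simp)
  · refine ⟨KK Bb * u.length, fun p => ?_⟩
    obtain ⟨t, h1, h2, h3⟩ := star hp hB u hne hu p
    exact ⟨t, h1, h2, h3⟩

theorem rw_tower : ∀ u w, IsReturnWord (ylev i 0) u w →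
    w.length ≤ KK Bb * u.length := by
  rintro u w ⟨⟨t, hwu⟩, hpref, hcount⟩
  -- u is nonempty
  by_cases hu0 : u = []
  · exfalso
    subst hu0
    have huniv : {j : ℕ | ([] : List (Fin 2)) <+: (w ++ []).drop j} = Set.univ :=
      Set.eq_univ_of_forall (fun j => List.nil_prefix)
    rw [OccCountEq, huniv] at hcount
    rw [Set.infinite_univ.ncard] at hcount
    omega
  have hn : 1 ≤ u.length := List.length_pos_of_ne_nil hu0
  -- w is nonempty
  by_cases hw0 : w = []
  · exfalso
    subst hw0
    have hone : {j : ℕ | u <+: (([] : List (Fin 2)) ++ u).drop j} = {0} := by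
      ext j
      simp only [List.nil_append, Set.mem_setOf_eq, Set.mem_singleton_iff]
      constructor
      · intro hj
        have := hj.length_le
        rw [List.length_drop] at this
        by_contra hj0
        have hju : j < u.length ∨ u.length ≤ j := by omega
        omega
      · rintro rfl
        simp
    rw [OccCountEq, hone, Set.ncard_singleton] at hcount
    omega
  have hwl : 1 ≤ w.length := List.length_pos_of_ne_nil hw0
  -- u occurs at t
  have hu_at_t : OccursAt (ylev i 0) u t := by
    have h0 : u <+: (w ++ u).drop 0 := by simpa using hpref
    have := occursAt_of_prefix_drop hwu h0 (by simp)
    simpa using this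
  -- the only occurrences of u inside wu are 0 and |w|
  have hS : ∀ j, u <+: (w ++ u).drop j → j = 0 ∨ j = w.length := by
    obtain ⟨a, b', hab, hab2⟩ := Set.ncard_eq_two.mp hcount
    have h0mem : (0 : ℕ) ∈ {j : ℕ | u <+: (w ++ u).drop j} := by
      simpa using hpref
    have hwmem : w.length ∈ {j : ℕ | u <+: (w ++ u).drop j} := by
      simp only [Set.mem_setOf_eq, List.drop_left]
      exact List.prefix_rfl
    rw [hab2] at h0mem hwmem
    intro j hj
    have hjmem : j ∈ ({a, b'} : Set ℕ) := by rw [← hab2]; exact hj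
    simp only [Set.mem_insert_iff, Set.mem_singleton_iff] at h0mem hwmem hjmem
    rcases h0mem with rfl | rfl <;> rcases hwmem with h | h <;> omega
  -- the next occurrence of u after t
  obtain ⟨s, hs1, hs2, hs3⟩ := star hp hB u hu0 ⟨t, hu_at_t⟩ (t + 1)
  -- w.length ≤ s - t
  have hwle : w.length ≤ s - t := by
    by_contra hcon
    have hj : u <+: (w ++ u).drop (s - t) := by
      apply prefix_drop_of_occursAt hwu hs3 (by omega)
      rw [List.length_append]
      omega
    rcases hS _ hj with h | h <;> omega
  omega

end Tower


/-- If `(i_n)_{n ≥ 1}` is a bounded sequence of positive integers, then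
`x = lim_k τ^{i₁}σ^{i₂}τ^{i₃}⋯τ^{i_{2k-1}}σ^{i_{2k}}(000⋯)` is linearly recurrent. -/
theorem sturmian_bounded_cf_lr (i : ℕ → ℕ) (hpos : ∀ n ≥ 1, 0 < i n)
    (hbd : ∃ B : ℕ, ∀ n ≥ 1, i n ≤ B)
    (x : ℕ → Fin 2) (hx : ConvergesTo (fun k => xi i k 0) 0 x) :
    LinearlyRecurrent x := by
  have hp : ∀ n, 1 ≤ i (n + 1) := fun n => hpos (n + 1) (by omega)
  obtain ⟨Bb, hBb⟩ := hbd
  have hB : ∀ n, i (n + 1) ≤ Bb := fun n => hBb (n + 1) (by omega)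
  have hxy : x = ylev i 0 := by
    funext m
    obtain ⟨N, hN⟩ := hx m
    have h1 := hN (max N (m + 1)) (le_max_left _ _)
    have hVx : xi i (max N (m + 1)) 0 = V i 0 (max N (m + 1)) :=
      xi_eq_chain i (max N (m + 1)) 0
    have hlen : m < (V i 0 (max N (m + 1))).length := by
      have h2 := V_length_ge hp (max N (m + 1)) 0
      have h3 : max N (m + 1) < 2 ^ max N (m + 1) := Nat.lt_two_pow_self
      have h4 : m + 1 ≤ max N (m + 1) := le_max_right _ _
      omega
    rw [← h1]
    show (xi i (max N (m + 1)) 0).getD (m % (xi i (max N (m + 1)) 0).length) 0 = _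
    rw [hVx, Nat.mod_eq_of_lt hlen, List.getD_eq_getElem _ _ hlen]
    exact (ylev_eq_V hp 0 hlen).symm
  rw [hxy]
  exact ⟨KK Bb, ur_tower hp hB, rw_tower hp hB⟩


end DurandLR
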